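/- Let a₁,…,aₙ be positive integers with gcd 1, set δ = (a₁,…,aₙ) and H = {x ∈ ℝⁿ : Σ a_i x_i = 0}. Let I ⊊ {1,…,n} with complement I' ≠ ∅, and d_I = gcd{a_j : j ∈ I'}. Define p_I : (ℤ^I ⊕ ℝ^{I'}) ∩ H → ℤ/d_Iℤ by (x_i) ↦ Σ_{i∈I} a_i x_i mod d_I. Then p_I is a surjective group homomorphism with kernel exactly (ℝ^{I'} ∩ H) + (ℤⁿ ∩ H). Consequently it induces an isomorphism ((ℤ^I ⊕ ℝ^{I'}) ∩ H) / ((ℝ^{I'} ∩ H) + (ℤⁿ ∩ H)) ≅ ℤ/d_Iℤ. -/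

import Mathlib

lemma bezout_finset {n : ℕ} (a : Fin n → ℕ) (s : Finset (Fin n)) :
    ∃ c : Fin n → ℤ, ∑ i ∈ s, (a i : ℤ) * c i = ((s.gcd a : ℕ) : ℤ) := by
  classical
  induction s using Finset.induction_on with
  | empty => exact ⟨0, by simp⟩
  | @insert j s hj ih =>
    obtain ⟨c, hc⟩ := ih
    set A := Int.gcdA (a j : ℤ) ((s.gcd a : ℕ) : ℤ)
    set B := Int.gcdB (a j : ℤ) ((s.gcd a : ℕ) : ℤ)
    refine ⟨fun i => if i = j then A else c i * B, ?_⟩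
    rw [Finset.sum_insert hj]; simp only [if_pos rfl]
    have h2 : ∑ i ∈ s, (a i : ℤ) * (if i = j then A else c i * B)
        = (∑ i ∈ s, (a i : ℤ) * c i) * B := by
      rw [Finset.sum_mul]
      refine Finset.sum_congr rfl fun i hi => ?_
      rw [if_neg (by rintro rfl; exact hj hi), mul_assoc]
    rw [h2, hc, Finset.gcd_insert]
    have := Int.gcd_eq_gcd_ab (a j : ℤ) ((s.gcd a : ℕ) : ℤ)
    rw [Int.gcd_natCast_natCast] at this
    exact this.symm

/-- with `H = {x ∈ ℝⁿ : Σ aᵢxᵢ = 0}`, `d_I = gcd{a_j : j ∈ I'}`, the map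
`p_I : (ℤ^I ⊕ ℝ^{I'}) ∩ H → ℤ/d_Iℤ`, `x ↦ Σ_{i∈I} aᵢxᵢ mod d_I` is a well-defined
(integer-valued before reduction) surjective homomorphism whose kernel is exactly
`(ℝ^{I'} ∩ H) + (ℤⁿ ∩ H)`. -/
theorem label_quotient_iso
    (n : ℕ) (a : Fin n → ℕ) (ha : ∀ i, 0 < a i)
    (hgcd : Finset.univ.gcd a = 1)
    (I : Finset (Fin n)) (hI : I ≠ Finset.univ) :
    -- the domain `(ℤ^I ⊕ ℝ^{I'}) ∩ H`
    let S : Set (Fin n → ℝ) :=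
      {x | (∑ i, (a i : ℝ) * x i = 0) ∧ ∀ i ∈ I, ∃ k : ℤ, x i = (k : ℝ)}
    let d : ℕ := Iᶜ.gcd a
    -- `p_I` takes integer values
    (∀ x ∈ S, ∃ m : ℤ, ∑ i ∈ I, (a i : ℝ) * x i = (m : ℝ)) ∧
    -- `p_I` is additive (a group homomorphism)
    (∀ x ∈ S, ∀ y ∈ S, x + y ∈ S ∧
      ∑ i ∈ I, (a i : ℝ) * (x + y) i =
        (∑ i ∈ I, (a i : ℝ) * x i) + ∑ i ∈ I, (a i : ℝ) * y i) ∧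
    -- `p_I` is surjective onto `ℤ/d_Iℤ`
    (∀ m : ℤ, ∃ x ∈ S, ∃ k : ℤ, ∑ i ∈ I, (a i : ℝ) * x i = ((m + k * d : ℤ) : ℝ)) ∧
    -- the kernel of `p_I` is exactly `(ℝ^{I'} ∩ H) + (ℤⁿ ∩ H)`
    (∀ x ∈ S, (∃ k : ℤ, ∑ i ∈ I, (a i : ℝ) * x i = ((k * d : ℤ) : ℝ)) ↔
      ∃ u v : Fin n → ℝ, x = u + v ∧
        (∀ i ∈ I, u i = 0) ∧ (∑ i, (a i : ℝ) * u i = 0) ∧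
        (∀ i, ∃ k : ℤ, v i = (k : ℝ)) ∧ (∑ i, (a i : ℝ) * v i = 0)) := by
  classical
  intro S d
  obtain ⟨j₀, hj₀I⟩ : ∃ j, j ∉ I := by
    by_contra h; push_neg at h; exact hI (Finset.eq_univ_iff_forall.mpr h)
  have hj₀ : j₀ ∈ Iᶜ := Finset.mem_compl.mpr hj₀I
  set g : ℕ := I.gcd a with hg
  -- coprimality of g and d
  have hcop : Nat.gcd g d = 1 := by
    have hu : I ∪ Iᶜ = (Finset.univ : Finset (Fin n)) := Finset.union_compl I
    have := hgcd
    rw [← hu, Finset.gcd_union] at this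
    exact this
  obtain ⟨c, hc⟩ := bezout_finset a I
  obtain ⟨c', hc'⟩ := bezout_finset a Iᶜ
  have hbez : (1 : ℤ) = g * Int.gcdA (g : ℤ) (d : ℤ) + d * Int.gcdB (g : ℤ) (d : ℤ) := by
    have := Int.gcd_eq_gcd_ab (g : ℤ) (d : ℤ)
    rw [Int.gcd_natCast_natCast, hcop] at this
    exact_mod_cast this
  set u0 : ℤ := Int.gcdA (g : ℤ) (d : ℤ)
  set v0 : ℤ := Int.gcdB (g : ℤ) (d : ℤ)
  have haj₀ : (a j₀ : ℝ) ≠ 0 := Nat.cast_ne_zero.mpr (ha j₀).ne'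
  refine ⟨?_, ?_, ?_, ?_⟩
  · -- integer values
    rintro x ⟨-, hx⟩
    choose k hk using hx
    refine ⟨∑ i ∈ I.attach, (a i.1 : ℤ) * k i.1 i.2, ?_⟩
    rw [← Finset.sum_attach I (fun i => (a i : ℝ) * x i)]
    push_cast
    exact Finset.sum_congr rfl fun i _ => by rw [hk i.1 i.2]
  · -- additivity
    rintro x ⟨hx1, hx2⟩ y ⟨hy1, hy2⟩
    refine ⟨⟨?_, ?_⟩, ?_⟩
    · simp only [Pi.add_apply, mul_add, Finset.sum_add_distrib, hx1, hy1, add_zero]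
    · intro i hi
      obtain ⟨k, hk⟩ := hx2 i hi
      obtain ⟨l, hl⟩ := hy2 i hi
      exact ⟨k + l, by simp [hk, hl]⟩
    · simp only [Pi.add_apply, mul_add, Finset.sum_add_distrib]
  · -- surjectivity
    intro m
    set M : ℤ := g * (u0 * m) with hM
    set x : Fin n → ℝ := fun i =>
      if i ∈ I then ((c i * (u0 * m) : ℤ) : ℝ)
      else if i = j₀ then -(M : ℝ) / (a j₀) else 0 with hxdef
    have hsumI : ∑ i ∈ I, (a i : ℝ) * x i = ((M : ℤ) : ℝ) := by
      have h1 : ∑ i ∈ I, (a i : ℝ) * x i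
          = ((∑ i ∈ I, (a i : ℤ) * (c i * (u0 * m)) : ℤ) : ℝ) := by
        push_cast
        refine Finset.sum_congr rfl fun i hi => ?_
        simp only [hxdef, if_pos hi]
        push_cast; ring
      rw [h1]
      congr 1
      rw [show ∑ i ∈ I, (a i : ℤ) * (c i * (u0 * m)) = (∑ i ∈ I, (a i : ℤ) * c i) * (u0 * m) by
        rw [Finset.sum_mul]; exact Finset.sum_congr rfl fun i _ => by ring, hc, hM]
    have hsumC : ∑ i ∈ Iᶜ, (a i : ℝ) * x i = -(M : ℝ) := by
      rw [Finset.sum_eq_single_of_mem j₀ hj₀ (fun b hb hne => by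
        simp [hxdef, if_neg (Finset.mem_compl.mp hb), if_neg hne])]
      simp only [hxdef, if_neg hj₀I, if_pos rfl, if_true]
      field_simp
    refine ⟨x, ⟨?_, ?_⟩, -(v0 * m), ?_⟩
    · rw [← Finset.sum_add_sum_compl I, hsumI, hsumC]; ring
    · intro i hi
      exact ⟨c i * (u0 * m), by simp [hxdef, if_pos hi]⟩
    · rw [hsumI]
      congr 1
      rw [hM]
      linear_combination (-m) * hbez
  · -- kernel
    rintro x ⟨hx1, hx2⟩
    constructor
    · rintro ⟨k, hk⟩
      choose kx hkx using hx2
      set vI : Fin n → ℤ := fun i => if h : i ∈ I then kx i h else c' i * (-k) with hvI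
      set v : Fin n → ℝ := fun i => ((vI i : ℤ) : ℝ) with hv
      have hvsum : ∑ i, (a i : ℝ) * v i = 0 := by
          rw [← Finset.sum_add_sum_compl I]
          have hA : ∑ i ∈ I, (a i : ℝ) * v i = ∑ i ∈ I, (a i : ℝ) * x i := by
            refine Finset.sum_congr rfl fun i hi => ?_
            simp only [hv, hvI, dif_pos hi]
            rw [hkx i hi]
          have hB : ∑ i ∈ Iᶜ, (a i : ℝ) * v i = ((d * (-k) : ℤ) : ℝ) := by
            have : ∑ i ∈ Iᶜ, (a i : ℝ) * v i
                = ((∑ i ∈ Iᶜ, (a i : ℤ) * (c' i * (-k)) : ℤ) : ℝ) := by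
              push_cast
              refine Finset.sum_congr rfl fun i hi => ?_
              simp only [hv, hvI, dif_neg (Finset.mem_compl.mp hi)]
              push_cast; ring
            rw [this]
            congr 1
            rw [show ∑ i ∈ Iᶜ, (a i : ℤ) * (c' i * (-k)) = (∑ i ∈ Iᶜ, (a i : ℤ) * c' i) * (-k) by
              rw [Finset.sum_mul]; exact Finset.sum_congr rfl fun i _ => by ring, hc']
          rw [hA, hB, hk]
          push_cast; ring
      refine ⟨x - v, v, by funext i; show x i = (x i - v i) + v i; ring, ?_, ?_,
        fun i => ⟨vI i, rfl⟩, hvsum⟩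
      · intro i hi
        simp only [Pi.sub_apply, hv, hvI, dif_pos hi, ← hkx i hi, sub_self]
      · simp only [Pi.sub_apply, mul_sub, Finset.sum_sub_distrib, hx1, hvsum, sub_zero]
    · rintro ⟨u, v, hxuv, hu0, husum, hvint, hvsum⟩
      choose mv hmv using hvint
      have hdvd : (d : ℤ) ∣ ∑ i ∈ Iᶜ, (a i : ℤ) * mv i :=
        Finset.dvd_sum fun i hi =>
          Dvd.dvd.mul_right (Int.natCast_dvd_natCast.mpr (Finset.gcd_dvd hi)) _
      obtain ⟨t, ht⟩ := hdvd
      refine ⟨-t, ?_⟩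
      have hIv : ∑ i ∈ I, (a i : ℝ) * x i = ∑ i ∈ I, (a i : ℝ) * v i := by
        refine Finset.sum_congr rfl fun i hi => ?_
        rw [hxuv]; simp [hu0 i hi]
      have hCv : ∑ i ∈ Iᶜ, (a i : ℝ) * v i = ((d * t : ℤ) : ℝ) := by
        have h1 : ∑ i ∈ Iᶜ, (a i : ℝ) * v i = ((∑ i ∈ Iᶜ, (a i : ℤ) * mv i : ℤ) : ℝ) := by
          push_cast
          exact Finset.sum_congr rfl fun i _ => by rw [hmv i]
        rw [h1, ht]
      have hsplit : ∑ i ∈ I, (a i : ℝ) * v i + ∑ i ∈ Iᶜ, (a i : ℝ) * v i = 0 := by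
        rw [Finset.sum_add_sum_compl I]; exact hvsum
      rw [hIv]
      rw [hCv] at hsplit
      push_cast at hsplit ⊢
      linarith
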